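/- For all k ≥ 1, the number of perfectly matchable sets of the cycle C_{2k} (i.e., p(C_{2k}; 1)) equals ⌊φ^{2k}⌋, where φ = (1+√5)/2 is the golden ratio. -/

import Mathlib

open Polynomial

variable {V : Type*}

/-- `M` (a finite set of edges) is a matching of the graph `G`:
its members are edges of `G` and no two distinct members share an endpoint. -/
def IsGraphMatching (G : SimpleGraph V) (M : Finset (Sym2 V)) : Prop :=
  (M : Set (Sym2 V)) ⊆ G.edgeSet ∧
    ∀ e ∈ M, ∀ f ∈ M, e ≠ f → ∀ x, x ∈ e → x ∉ f

/-- The set of vertices covered by the edge set `M` is exactly `S`. -/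
def Covers (M : Finset (Sym2 V)) (S : Finset V) : Prop :=
  ∀ x, x ∈ S ↔ ∃ e ∈ M, x ∈ e

/-- `M` is a perfect matching of the induced subgraph `G[S]`. -/
def IsPerfectMatchingOn (G : SimpleGraph V) (M : Finset (Sym2 V)) (S : Finset V) : Prop :=
  IsGraphMatching G M ∧ Covers M S

/-- `S` is a perfectly matchable set of `G`. -/
def IsPMS (G : SimpleGraph V) (S : Finset V) : Prop :=
  ∃ M, IsPerfectMatchingOn G M S

open Classical in
/-- The perfectly matchable set polynomial of the subgraph of `G` induced on the
ground vertex set `A`: the generating function `∑ p_{2k} z^k` where `p_{2k}` is the number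
of perfectly matchable sets `S ⊆ A` with `|S| = 2k`. -/
noncomputable def pmPoly [Fintype V] (G : SimpleGraph V) (A : Finset V) : Polynomial ℤ :=
  ∑ S ∈ A.powerset, if IsPMS G S then X ^ (S.card / 2) else 0

/-- `G` has no cycle of even length. -/
def NoEvenCycle (G : SimpleGraph V) : Prop :=
  ∀ (v : V) (c : G.Walk v v), c.IsCycle → ¬ Even c.length

open Finset
open Fin.NatCast Fin.CommRing


/-- nat-sparse: no two consecutive elements -/
def NS (T : Finset ℕ) : Prop := ∀ i ∈ T, i + 1 ∉ T

instance : DecidablePred NS := fun _ => Finset.decidableDforallFinset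

lemma NS_mono {T T' : Finset ℕ} (h : T' ⊆ T) (hT : NS T) : NS T' :=
  fun i hi hi1 => hT i (h hi) (h hi1)

lemma linCount (m : ℕ) :
    (((range m).powerset).filter NS).card = Nat.fib (m + 2) := by
  induction m using Nat.strong_induction_on with
  | _ m ih =>
  match m with
  | 0 =>
    decide
  | 1 =>
    decide
  | (m+2) =>
    have hsplit := Finset.card_filter_add_card_filter_not
      (s := ((range (m+2)).powerset).filter NS) (p := fun T => m + 1 ∈ T)
    have h1 : ((((range (m+2)).powerset).filter NS).filter (fun T => ¬ m + 1 ∈ T))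
        = ((range (m+1)).powerset).filter NS := by
      ext T
      simp only [mem_filter, mem_powerset]
      constructor
      · rintro ⟨⟨hsub, hns⟩, hmem⟩
        refine ⟨fun x hx => ?_, hns⟩
        have := hsub hx
        rw [mem_range] at this ⊢
        rcases Nat.lt_succ_iff_lt_or_eq.mp this with h | h
        · exact h
        · exact absurd (h ▸ hx) hmem
      · rintro ⟨hsub, hns⟩
        refine ⟨⟨hsub.trans (by intro x; simp only [mem_range]; omega), hns⟩, fun hc => ?_⟩
        have := hsub hc; simp at this
    have h2 : ((((range (m+2)).powerset).filter NS).filter (fun T => m + 1 ∈ T)).card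
        = (((range m).powerset).filter NS).card := by
      apply Finset.card_bij (i := fun T _ => T.erase (m+1))
      · rintro T hT
        simp only [mem_filter, mem_powerset] at hT ⊢
        obtain ⟨⟨hsub, hns⟩, hmem⟩ := hT
        refine ⟨fun x hx => ?_, NS_mono (erase_subset _ _) hns⟩
        rw [mem_erase] at hx
        have hx2 := hsub hx.2
        rw [mem_range] at hx2 ⊢
        rcases Nat.lt_succ_iff_lt_or_eq.mp hx2 with h | h
        · rcases Nat.lt_succ_iff_lt_or_eq.mp h with h' | h'
          · exact h'
          · exfalso; exact hns x hx.2 (by rw [h']; exact hmem)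
        · exact absurd h hx.1
      · rintro T hT T' hT' hEq
        simp only [mem_filter] at hT hT'
        have : insert (m+1) (T.erase (m+1)) = insert (m+1) (T'.erase (m+1)) := by rw [hEq]
        rwa [Finset.insert_erase hT.2, Finset.insert_erase hT'.2] at this
      · rintro T' hT'
        simp only [mem_filter, mem_powerset] at hT'
        obtain ⟨hsub, hns⟩ := hT'
        have hm : m + 1 ∉ T' := fun hc => by have := hsub hc; rw [mem_range] at this; omega
        refine ⟨insert (m+1) T', ?_, by rw [Finset.erase_insert hm]⟩
        simp only [mem_filter, mem_powerset, mem_insert, true_or, and_true]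
        refine ⟨?_, ?_⟩
        · intro x hx
          rcases mem_insert.mp hx with h | h
          · rw [mem_range]; omega
          · have := hsub h; rw [mem_range] at this ⊢; omega
        · intro i hi hi1
          rcases mem_insert.mp hi with h | h
          · rcases mem_insert.mp hi1 with h' | h'
            · omega
            · have := hsub h'; rw [mem_range] at this; omega
          · rcases mem_insert.mp hi1 with h' | h'
            · have := hsub h; rw [mem_range] at this; omega
            · exact hns i h h'
    rw [← hsplit, h1, h2, ih (m+1) (by omega), ih m (by omega)]
    exact (Nat.fib_add_two).symm

lemma segCount (a m : ℕ) :
    (((Ico a (a + m)).powerset).filter NS).card = Nat.fib (m + 2) := by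
  rw [← linCount m]
  symm
  apply Finset.card_bij (i := fun T _ => T.image (· + a))
  · intro T hT
    simp only [mem_filter, mem_powerset] at hT ⊢
    obtain ⟨hsub, hns⟩ := hT
    constructor
    · intro x hx
      rcases mem_image.mp hx with ⟨t, ht, rfl⟩
      have := hsub ht; rw [mem_range] at this; rw [mem_Ico]; omega
    · intro i hi hi1
      rcases mem_image.mp hi with ⟨t, ht, rfl⟩
      rcases mem_image.mp hi1 with ⟨t', ht', he⟩
      have : t' = t + 1 := by omega
      exact hns t ht (this ▸ ht')
  · intro T hT T' hT' hEq
    exact Finset.image_injective (add_left_injective a) hEq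
  · intro T' hT'
    simp only [mem_filter, mem_powerset] at hT'
    obtain ⟨hsub, hns⟩ := hT'
    refine ⟨T'.image (· - a), ?_, ?_⟩
    · simp only [mem_filter, mem_powerset]
      constructor
      · intro x hx
        rcases mem_image.mp hx with ⟨t, ht, rfl⟩
        have := hsub ht; rw [mem_Ico] at this; rw [mem_range]; omega
      · intro i hi hi1
        rcases mem_image.mp hi with ⟨t, ht, rfl⟩
        rcases mem_image.mp hi1 with ⟨t', ht', he⟩
        have h1 := hsub ht; have h2 := hsub ht'
        rw [mem_Ico] at h1 h2
        have : t' = t + 1 := by omega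
        exact hns t ht (this ▸ ht')
    · ext x
      simp only [mem_image]
      constructor
      · rintro ⟨y, ⟨t, ht, rfl⟩, rfl⟩
        have := hsub ht; rw [mem_Ico] at this
        have : t - a + a = t := by omega
        rwa [this]
      · intro hx
        have := hsub hx; rw [mem_Ico] at this
        exact ⟨x - a, ⟨x, hx, rfl⟩, by omega⟩

/-- Fin-sparse: no two cyclically consecutive elements. -/
abbrev FS {n : ℕ} [NeZero n] (T : Finset (Fin n)) : Prop := ∀ i ∈ T, i + 1 ∉ T

lemma fin_add_one_val {n : ℕ} [NeZero n] (hn : 2 ≤ n) (i : Fin n) :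
    ((i + 1 : Fin n)).val = (i.val + 1) % n := by
  have : (1 : Fin n).val = 1 := by
    rw [Fin.val_one']; exact Nat.mod_eq_of_lt (by omega)
  rw [Fin.add_def, this]

lemma fin_add_one_val_lt {n : ℕ} [NeZero n] (hn : 2 ≤ n) {i : Fin n} (h : i.val + 1 < n) :
    ((i + 1 : Fin n)).val = i.val + 1 := by
  rw [fin_add_one_val hn, Nat.mod_eq_of_lt h]

lemma finCount {n : ℕ} [NeZero n] (hn : 2 ≤ n) :
    ((univ : Finset (Finset (Fin n))).filter FS).card
      = Nat.fib (n + 1) + Nat.fib (n - 1) := by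
  have hsplit := Finset.card_filter_add_card_filter_not
    (s := (univ : Finset (Finset (Fin n))).filter FS) (p := fun T => (0 : Fin n) ∈ T)
  have h0 : ((((univ : Finset (Finset (Fin n))).filter FS).filter
      (fun T => ¬ (0 : Fin n) ∈ T)).card) = Nat.fib (n + 1) := by
    have hseg := segCount 1 (n - 1)
    rw [show 1 + (n-1) = n by omega] at hseg
    rw [show Nat.fib (n+1) = Nat.fib ((n-1) + 2) by congr 1; omega, ← hseg]
    apply Finset.card_bij (i := fun T _ => T.image Fin.val)
    · intro T hT
      simp only [mem_filter, mem_univ, true_and] at hT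
      obtain ⟨hfs, h0T⟩ := hT
      simp only [mem_filter, mem_powerset]
      constructor
      · intro x hx
        rcases mem_image.mp hx with ⟨t, ht, rfl⟩
        rw [mem_Ico]
        refine ⟨?_, t.isLt⟩
        have : t.val ≠ 0 := fun h =>
          h0T ((Fin.ext (h.trans (Fin.val_zero n).symm) : t = 0) ▸ ht)
        omega
      · intro v hv hv1
        rcases mem_image.mp hv with ⟨t, ht, rfl⟩
        rcases mem_image.mp hv1 with ⟨t', ht', he⟩
        have hlt : t.val + 1 < n := he ▸ t'.isLt
        have : t' = t + 1 := by
          apply Fin.ext; rw [fin_add_one_val_lt hn hlt, he]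
        exact hfs t ht (this ▸ ht')
    · intro T hT T' hT' hEq
      exact Finset.image_injective Fin.val_injective hEq
    · intro T' hT'
      simp only [mem_filter, mem_powerset] at hT'
      obtain ⟨hsub, hns⟩ := hT'
      have hbd : ∀ x ∈ T', x < n := fun x hx => (mem_Ico.mp (hsub hx)).2
      refine ⟨T'.attachFin hbd, ?_, ?_⟩
      · simp only [mem_filter, mem_univ, true_and]
        constructor
        · intro i hi hi1
          rw [Finset.mem_attachFin] at hi hi1
          have h1 := mem_Ico.mp (hsub hi)
          rcases Nat.lt_or_ge (i.val + 1) n with h | h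
          · rw [fin_add_one_val_lt hn h] at hi1
            exact hns i.val hi hi1
          · have : (i + 1 : Fin n).val = 0 := by
              rw [fin_add_one_val hn]
              have : i.val + 1 = n := by omega
              rw [this, Nat.mod_self]
            rw [this] at hi1
            have := mem_Ico.mp (hsub hi1); omega
        · intro hc
          rw [Finset.mem_attachFin] at hc
          have := mem_Ico.mp (hsub hc)
          simp at this
      · ext x
        simp only [mem_image]
        constructor
        · rintro ⟨a, ha, rfl⟩
          rwa [Finset.mem_attachFin] at ha
        · intro hx
          exact ⟨⟨x, hbd x hx⟩, by rwa [Finset.mem_attachFin], rfl⟩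
  have h1 : ((((univ : Finset (Finset (Fin n))).filter FS).filter
      (fun T => (0 : Fin n) ∈ T)).card) = Nat.fib (n - 1) := by
    have hseg := segCount 2 (n - 3)
    have hfib : Nat.fib ((n - 3) + 2) = Nat.fib (n - 1) := by
      rcases Nat.lt_or_ge n 3 with h | h
      · interval_cases n
        · rfl
      · congr 1; omega
    rw [← hfib, ← hseg]
    apply Finset.card_bij (i := fun T _ => (T.erase 0).image Fin.val)
    · intro T hT
      simp only [mem_filter, mem_univ, true_and] at hT
      obtain ⟨hfs, h0T⟩ := hT
      simp only [mem_filter, mem_powerset]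
      have hkey : ∀ i ∈ T.erase 0, 2 ≤ i.val ∧ i.val + 1 < n := by
        intro i hi
        rw [mem_erase] at hi
        obtain ⟨hne, hiT⟩ := hi
        have hv1 : 1 ≤ i.val := by
          have : i.val ≠ 0 := fun h =>
            hne (Fin.ext (h.trans (Fin.val_zero n).symm))
          omega
        have hv2 : i.val ≠ 1 := by
          intro hc
          have : i = (1 : Fin n) := by
            apply Fin.ext; rw [hc]
            rw [Fin.val_one']; exact (Nat.mod_eq_of_lt (by omega)).symm
          have h01 : (0 : Fin n) + 1 = i := by rw [this, zero_add]
          exact hfs 0 h0T (h01 ▸ hiT)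
        have hv3 : i.val + 1 ≠ n := by
          intro hc
          have : (i + 1 : Fin n) = 0 := by
            apply Fin.ext
            rw [fin_add_one_val hn, hc, Nat.mod_self]
            rfl
          exact hfs i hiT (this ▸ h0T)
        exact ⟨by omega, by have := i.isLt; omega⟩
      constructor
      · intro x hx
        rcases mem_image.mp hx with ⟨t, ht, rfl⟩
        have := hkey t ht
        rw [mem_Ico]; omega
      · intro v hv hv1
        rcases mem_image.mp hv with ⟨t, ht, rfl⟩
        rcases mem_image.mp hv1 with ⟨t', ht', he⟩
        have h1 := hkey t ht
        have : t' = t + 1 := by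
          apply Fin.ext
          rw [fin_add_one_val_lt hn (show t.val + 1 < n by omega)]
          omega
        rw [mem_erase] at ht ht'
        exact hfs t ht.2 (this ▸ ht'.2)
    · intro T hT T' hT' hEq
      simp only [mem_filter, mem_univ, true_and] at hT hT'
      have h2 := Finset.image_injective Fin.val_injective hEq
      have : insert (0 : Fin n) (T.erase 0) = insert 0 (T'.erase 0) := by rw [h2]
      rwa [Finset.insert_erase hT.2, Finset.insert_erase hT'.2] at this
    · intro T' hT'
      simp only [mem_filter, mem_powerset] at hT'
      obtain ⟨hsub, hns⟩ := hT'
      have hbd0 : ∀ x ∈ T', 2 ≤ x ∧ x < 2 + (n - 3) := fun x hx => mem_Ico.mp (hsub hx)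
      have hbd : ∀ x ∈ T', x < n := by intro x hx; have := hbd0 x hx; omega
      refine ⟨insert 0 (T'.attachFin hbd), ?_, ?_⟩
      · simp only [mem_filter, mem_univ, true_and, mem_insert, true_or, and_true]
        intro i hi hi1
        rcases mem_insert.mp hi with h | h
        · subst h
          rcases mem_insert.mp hi1 with h' | h'
          · have : ((0 : Fin n) + 1).val = 1 := by
              rw [fin_add_one_val hn, Fin.val_zero]
              exact Nat.mod_eq_of_lt (by omega)
            rw [h'] at this
            rw [Fin.val_zero] at this
            omega
          · rw [Finset.mem_attachFin] at h'
            have := hbd0 _ h'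
            have hv : ((0 : Fin n) + 1).val = 1 := by
              rw [fin_add_one_val hn, Fin.val_zero]
              exact Nat.mod_eq_of_lt (by omega)
            omega
        · rw [Finset.mem_attachFin] at h
          have hb := hbd0 _ h
          have hlt : i.val + 1 < n := by omega
          rcases mem_insert.mp hi1 with h' | h'
          · have : (i + 1 : Fin n).val = 0 := by rw [h']; rfl
            rw [fin_add_one_val_lt hn hlt] at this
            omega
          · rw [Finset.mem_attachFin, fin_add_one_val_lt hn hlt] at h'
            exact hns i.val h h'
      · have h0 : (0 : Fin n) ∉ T'.attachFin hbd := by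
          rw [Finset.mem_attachFin]
          intro hc
          have := hbd0 _ hc; simp at this
        rw [Finset.erase_insert h0]
        ext x
        simp only [mem_image]
        constructor
        · rintro ⟨a, ha, rfl⟩
          rwa [Finset.mem_attachFin] at ha
        · intro hx
          exact ⟨⟨x, hbd x hx⟩, by rwa [Finset.mem_attachFin], rfl⟩
  rw [← hsplit, h0, h1, Nat.add_comm]

def coverF {n : ℕ} [NeZero n] (T : Finset (Fin n)) : Finset (Fin n) :=
  T ∪ T.image (· + 1)

lemma mem_coverF {n : ℕ} [NeZero n] {T : Finset (Fin n)} {x : Fin n} :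
    x ∈ coverF T ↔ ∃ i ∈ T, x = i ∨ x = i + 1 := by
  simp only [coverF, mem_union, mem_image]
  constructor
  · rintro (h | ⟨i, hi, rfl⟩)
    · exact ⟨x, h, Or.inl rfl⟩
    · exact ⟨i, hi, Or.inr rfl⟩
  · rintro ⟨i, hi, rfl | rfl⟩
    · exact Or.inl hi
    · exact Or.inr ⟨i, hi, rfl⟩

/-- parity of values is additive in `Fin n` when `2 ∣ n`. -/
lemma val_add_cast_mod_two {n : ℕ} [NeZero n] (hd : 2 ∣ n) (i : Fin n) (j : ℕ) :
    ((i + (j : Fin n)).val) % 2 = (i.val + j) % 2 := by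
  rw [Fin.val_add, Fin.val_natCast]
  have h1 : (i.val + j % n) % n % 2 = (i.val + j % n) % 2 := Nat.mod_mod_of_dvd _ hd
  have h2 : j % n % 2 = j % 2 := Nat.mod_mod_of_dvd _ hd
  omega

lemma mem_step {n : ℕ} [NeZero n] {T : Finset (Fin n)} (hT : FS T)
    (hc : coverF T = univ) {i : Fin n} (hi : i ∈ T) : i + 2 ∈ T := by
  have : (i + 2 : Fin n) ∈ coverF T := hc ▸ mem_univ _
  rcases mem_coverF.mp this with ⟨u, hu, he | he⟩
  · exact he ▸ hu
  · exfalso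
    have : u = i + 1 := by
      have : i + 2 = (i + 1) + 1 := by ring
      rw [this] at he
      exact (add_left_injective 1 he).symm
    exact hT i hi (this ▸ hu)

lemma mem_iter {n : ℕ} [NeZero n] {T : Finset (Fin n)} (hT : FS T)
    (hc : coverF T = univ) {i : Fin n} (hi : i ∈ T) (j : ℕ) :
    i + ((2 * j : ℕ) : Fin n) ∈ T := by
  induction j with
  | zero => simpa using hi
  | succ j ih =>
    have hcast : ((2 * (j + 1) : ℕ) : Fin n) = ((2 * j : ℕ) : Fin n) + 2 := by
      push_cast; ring
    rw [hcast, ← add_assoc]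
    exact mem_step hT hc ih

lemma coverF_univ_cases {n k : ℕ} [NeZero n] (hk : 1 ≤ k) (hn : n = 2 * k)
    {T : Finset (Fin n)} (hT : FS T) (hc : coverF T = univ) :
    T = univ.filter (fun i : Fin n => i.val % 2 = 0) ∨
      T = univ.filter (fun i : Fin n => i.val % 2 = 1) := by
  have hd : 2 ∣ n := ⟨k, hn⟩
  have hn2 : 2 ≤ n := by omega
  -- get an element of T
  obtain ⟨v, hv⟩ : ∃ v, v ∈ T := by
    have : (0 : Fin n) ∈ coverF T := hc ▸ mem_univ _
    rcases mem_coverF.mp this with ⟨u, hu, _⟩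
    exact ⟨u, hu⟩
  -- every element of T has the same parity as v
  have hpar : ∀ w ∈ T, w.val % 2 = v.val % 2 := by
    intro w hw
    by_contra hne
    -- show v + 1 ∈ T, contradiction with v ∈ T
    set d := ((v + 1 - w).val) with hd'
    have hvw : w + ((d : ℕ) : Fin n) = v + 1 := by
      rw [hd', Fin.cast_val_eq_self]
      rw [add_comm, sub_add_cancel]
    have hpv : (w.val + d) % 2 = ((v + 1 : Fin n)).val % 2 := by
      rw [← val_add_cast_mod_two hd w d, hvw]
    have hv1 : ((v + 1 : Fin n)).val % 2 = (v.val + 1) % 2 := by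
      have := val_add_cast_mod_two hd v 1
      rwa [Nat.cast_one] at this
    have hdeven : d % 2 = 0 := by omega
    have : v + 1 ∈ T := by
      have h2 := mem_iter hT hc hw (d / 2)
      rwa [show 2 * (d / 2) = d by omega, hvw] at h2
    exact hT v hv this
  have hTeq : T = univ.filter (fun i : Fin n => i.val % 2 = v.val % 2) := by
    ext w
    simp only [mem_filter, mem_univ, true_and]
    constructor
    · exact hpar w
    · intro hw
      set d := ((w - v).val) with hd'
      have hvw : v + ((d : ℕ) : Fin n) = w := by
        rw [hd', Fin.cast_val_eq_self, add_comm, sub_add_cancel]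
      have hpv : (v.val + d) % 2 = w.val % 2 := by
        rw [← val_add_cast_mod_two hd v d, hvw]
      have hdeven : d % 2 = 0 := by omega
      have h2 := mem_iter hT hc hv (d / 2)
      rwa [show 2 * (d / 2) = d by omega, hvw] at h2
  rcases (by omega : v.val % 2 = 0 ∨ v.val % 2 = 1) with h | h
  · left; rw [hTeq, h]
  · right; rw [hTeq, h]

lemma FS_parity {n k : ℕ} [NeZero n] (hk : 1 ≤ k) (hn : n = 2 * k) (p : ℕ) :
    FS (univ.filter (fun i : Fin n => i.val % 2 = p)) := by
  have hd : 2 ∣ n := ⟨k, hn⟩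
  intro i hi hi1
  simp only [mem_filter, mem_univ, true_and] at hi hi1
  have := val_add_cast_mod_two hd i 1
  rw [Nat.cast_one] at this
  omega

lemma coverF_parity {n k : ℕ} [NeZero n] (hk : 1 ≤ k) (hn : n = 2 * k) (p : ℕ) (hp : p < 2) :
    coverF (univ.filter (fun i : Fin n => i.val % 2 = p)) = univ := by
  have hd : 2 ∣ n := ⟨k, hn⟩
  apply Finset.eq_univ_of_forall
  intro w
  rw [mem_coverF]
  by_cases hw : w.val % 2 = p
  · exact ⟨w, by simp [hw], Or.inl rfl⟩
  · refine ⟨w - 1, ?_, Or.inr (by rw [sub_add_cancel])⟩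
    simp only [mem_filter, mem_univ, true_and]
    have h2 : (w - 1 + ((1 : ℕ) : Fin n) : Fin n) = w := by
      rw [Nat.cast_one, sub_add_cancel]
    have hpar := val_add_cast_mod_two hd (w - 1) 1
    rw [h2] at hpar
    omega

/-- uniqueness of sparse preimage when cover is not everything -/
lemma coverF_inj {n : ℕ} [NeZero n] {T T' : Finset (Fin n)} (hT : FS T) (hT' : FS T')
    (hc : coverF T = coverF T') (hne : coverF T ≠ univ) : T = T' := by
  obtain ⟨v, hv⟩ : ∃ v, v ∉ coverF T := by
    by_contra h
    push_neg at h
    exact hne (Finset.eq_univ_of_forall h)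
  have key : ∀ j : ℕ, (v + (j : Fin n) ∈ T ↔ v + (j : Fin n) ∈ T') := by
    have step : ∀ (A B : Finset (Fin n)), FS A → FS B → coverF A = coverF B →
        ∀ j : ℕ, (v + (j : Fin n) ∈ A ↔ v + (j : Fin n) ∈ B) →
        v + ((j + 1 : ℕ) : Fin n) ∈ A → v + ((j + 1 : ℕ) : Fin n) ∈ B := by
      intro A B hA hB hAB j hIH hw
      set w := v + ((j + 1 : ℕ) : Fin n) with hwd
      have hwc : w ∈ coverF B := by
        rw [← hAB, mem_coverF]
        exact ⟨w, hw, Or.inl rfl⟩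
      rcases mem_coverF.mp hwc with ⟨u, hu, he | he⟩
      · exact he ▸ hu
      · -- u + 1 = w, so u = v + j
        have hu2 : u = v + (j : Fin n) := by
          have : w = v + (j : Fin n) + 1 := by
            rw [hwd]; push_cast; ring
          rw [this] at he
          exact add_left_injective 1 he.symm
      -- then v + j ∈ B hence ∈ A, and sparsity of A contradicts w ∈ A
        exfalso
        have hjA : v + (j : Fin n) ∈ A := hIH.mpr (hu2 ▸ hu)
        have : v + (j : Fin n) + 1 ∉ A := hA _ hjA
        rw [show v + (j : Fin n) + 1 = w by rw [hwd]; push_cast; ring] at this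
        exact this hw
    intro j
    induction j with
    | zero =>
      constructor <;> intro h <;> exfalso
      · exact hv (by rw [mem_coverF]; exact ⟨_, by simpa using h, Or.inl (by simp)⟩)
      · rw [hc] at hv
        exact hv (by rw [mem_coverF]; exact ⟨_, by simpa using h, Or.inl (by simp)⟩)
    | succ j ih =>
      exact ⟨step T T' hT hT' hc j ih, step T' T hT' hT hc.symm j (Iff.symm ih)⟩
  ext x
  have hx : v + (((x - v).val : ℕ) : Fin n) = x := by
    rw [Fin.cast_val_eq_self, add_comm, sub_add_cancel]
  have := key ((x - v).val)
  rwa [hx] at this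

open SimpleGraph

lemma edge_decode {m : ℕ} {e : Sym2 (Fin (m + 2))}
    (he : e ∈ (cycleGraph (m + 2)).edgeSet) : ∃ i : Fin (m + 2), e = s(i, i + 1) := by
  induction e with
  | _ u v =>
    rw [mem_edgeSet, cycleGraph_adj] at he
    rcases he with h | h
    · refine ⟨v, ?_⟩
      rw [sub_eq_iff_eq_add] at h
      rw [h, add_comm 1 v, Sym2.eq_swap]
    · refine ⟨u, ?_⟩
      rw [sub_eq_iff_eq_add] at h
      rw [h, add_comm 1 u]

lemma IsPMS_coverF {m : ℕ} (T : Finset (Fin (m + 2))) (hT : FS T) :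
    IsPMS (cycleGraph (m + 2)) (coverF T) := by
  refine ⟨T.image (fun i => s(i, i + 1)), ⟨?_, ?_⟩, ?_⟩
  · intro e he
    rcases Finset.mem_image.mp he with ⟨i, hi, rfl⟩
    show s(i, i + 1) ∈ (cycleGraph (m + 2)).edgeSet
    rw [mem_edgeSet, cycleGraph_adj]
    right; rw [add_sub_cancel_left]
  · intro e he f hf hne x hxe hxf
    rcases Finset.mem_image.mp he with ⟨i, hi, rfl⟩
    rcases Finset.mem_image.mp hf with ⟨j, hj, rfl⟩
    rw [Sym2.mem_iff] at hxe hxf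
    rcases hxe with rfl | rfl <;> rcases hxf with h | h
    · exact hne (by rw [h])
    · exact hT j hj (h ▸ hi)
    · exact hT i hi (h ▸ hj)
    · exact hne (by rw [add_left_injective 1 h])
  · intro x
    rw [mem_coverF]
    constructor
    · rintro ⟨i, hi, rfl | rfl⟩
      · exact ⟨s(x, x + 1), Finset.mem_image_of_mem _ hi, by rw [Sym2.mem_iff]; left; rfl⟩
      · exact ⟨s(i, i + 1), Finset.mem_image_of_mem _ hi, by rw [Sym2.mem_iff]; right; rfl⟩
    · rintro ⟨e, he, hxe⟩
      rcases Finset.mem_image.mp he with ⟨i, hi, rfl⟩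
      rw [Sym2.mem_iff] at hxe
      rcases hxe with rfl | rfl
      · exact ⟨x, hi, Or.inl rfl⟩
      · exact ⟨i, hi, Or.inr rfl⟩

lemma coverF_surj_three {m : ℕ} {S : Finset (Fin (m + 3))}
    (h : IsPMS (cycleGraph (m + 3)) S) : ∃ T, FS T ∧ coverF T = S := by
  obtain ⟨M, ⟨hsub, hdisj⟩, hcov⟩ := h
  classical
  refine ⟨univ.filter (fun i => s(i, i + 1) ∈ M), ?_, ?_⟩
  · intro i hi hi1
    simp only [Finset.mem_filter, Finset.mem_univ, true_and] at hi hi1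
    have hne : s(i, i + 1) ≠ s(i + 1, i + 1 + 1) := by
      intro hc
      rw [Sym2.eq_iff] at hc
      rcases hc with ⟨h1, _⟩ | ⟨h1, _⟩
      · have h2 := left_eq_add.mp h1
        have hv := congrArg Fin.val h2
        have hv1 : ((1 : Fin (m + 3))).val = 1 % (m + 3) := rfl
        have hv0 : ((0 : Fin (m + 3))).val = 0 := rfl
        rw [hv1, hv0, Nat.mod_eq_of_lt (by omega)] at hv
        omega
      · have h2 : i = i + 2 := by rwa [add_assoc, one_add_one_eq_two] at h1
        have h3 := left_eq_add.mp h2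
        have hv := congrArg Fin.val h3
        have hv2 : ((2 : Fin (m + 3))).val = 2 % (m + 3) := rfl
        have hv0 : ((0 : Fin (m + 3))).val = 0 := rfl
        rw [hv2, hv0, Nat.mod_eq_of_lt (by omega)] at hv
        omega
    exact hdisj _ hi _ hi1 hne (i + 1) (by rw [Sym2.mem_iff]; right; rfl)
      (by rw [Sym2.mem_iff]; left; rfl)
  · ext x
    rw [mem_coverF, hcov x]
    constructor
    · rintro ⟨i, hi, rfl | rfl⟩ <;>
        simp only [Finset.mem_filter, Finset.mem_univ, true_and] at hi
      · exact ⟨s(x, x + 1), hi, by rw [Sym2.mem_iff]; left; rfl⟩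
      · exact ⟨s(i, i + 1), hi, by rw [Sym2.mem_iff]; right; rfl⟩
    · rintro ⟨e, he, hxe⟩
      obtain ⟨i, rfl⟩ := edge_decode (hsub he)
      rw [Sym2.mem_iff] at hxe
      rcases hxe with rfl | rfl
      · exact ⟨x, by simp [he], Or.inl rfl⟩
      · exact ⟨i, by simp [he], Or.inr rfl⟩

lemma coverF_surj_two {S : Finset (Fin 2)}
    (h : IsPMS (cycleGraph 2) S) : ∃ T, FS T ∧ coverF T = S := by
  obtain ⟨M, ⟨hsub, hdisj⟩, hcov⟩ := h
  classical
  have hdec : ∀ e ∈ M, e = s((0 : Fin 2), 1) := by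
    intro e he
    obtain ⟨i, rfl⟩ := edge_decode (m := 0) (hsub he)
    have hall : ∀ j : Fin 2, (s(j, j + 1) : Sym2 (Fin 2)) = s(0, 1) := by decide
    exact hall i
  by_cases hM : s((0 : Fin 2), 1) ∈ M
  · refine ⟨{0}, by decide, ?_⟩
    have hS : S = Finset.univ := by
      apply Finset.eq_univ_of_forall
      intro x
      rw [hcov x]
      exact ⟨s(0, 1), hM, by revert x; decide⟩
    rw [hS]; decide
  · refine ⟨∅, by decide, ?_⟩
    have hS : S = ∅ := by
      rw [Finset.eq_empty_iff_forall_notMem]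
      intro x hx
      obtain ⟨e, he, _⟩ := (hcov x).mp hx
      exact hM (hdec e he ▸ he)
    rw [hS]; decide

lemma coverF_surj {m : ℕ} {S : Finset (Fin (m + 2))}
    (h : IsPMS (SimpleGraph.cycleGraph (m + 2)) S) : ∃ T, FS T ∧ coverF T = S := by
  match m with
  | 0 => exact coverF_surj_two h
  | (m' + 1) => exact coverF_surj_three h

open goldenRatio in
lemma gold_floor (k : ℕ) (hk : 1 ≤ k) :
    ⌊φ ^ (2 * k)⌋ = (Nat.fib (2 * k + 1) : ℤ) + (Nat.fib (2 * k - 1) : ℤ) - 1 := by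
  set n := 2 * k with hn
  have hn1 : 1 ≤ n := by omega
  have hLn : φ ^ n + ψ ^ n = (Nat.fib (n + 1) : ℝ) + (Nat.fib (n - 1) : ℝ) := by
    have h1 := Real.goldenRatio_mul_fib_succ_add_fib (n - 1)
    rw [show n - 1 + 1 = n by omega] at h1
    have h2 := Real.fib_succ_sub_goldenRatio_mul_fib n
    rw [← h1, ← h2]; ring
  have hψ1 : ψ ^ n = (ψ ^ 2) ^ k := by rw [← pow_mul]
  have hsq0 : (0 : ℝ) < ψ ^ 2 := by
    rw [Real.goldenConj_sq]; have := Real.neg_one_lt_goldenConj; linarith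
  have hsq1 : ψ ^ 2 < 1 := by
    rw [Real.goldenConj_sq]; have := Real.goldenConj_neg; linarith
  have hψpos : 0 < ψ ^ n := by rw [hψ1]; exact pow_pos hsq0 k
  have hψlt : ψ ^ n < 1 := by
    rw [hψ1]; exact pow_lt_one₀ hsq0.le hsq1 (by omega)
  rw [Int.floor_eq_iff]
  constructor
  · push_cast
    nlinarith [hLn, hψlt]
  · push_cast
    nlinarith [hLn, hψpos]


open Classical in
lemma pms_count {n k : ℕ} [NeZero n] (hk : 1 ≤ k) (hn : n = 2 * k) :
    (((Finset.univ : Finset (Finset (Fin n))).filter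
        (fun S => IsPMS (SimpleGraph.cycleGraph n) S)).card) + 1
      = ((Finset.univ : Finset (Finset (Fin n))).filter FS).card := by
  obtain ⟨m, rfl⟩ : ∃ m, n = m + 2 := ⟨n - 2, by omega⟩
  set G := SimpleGraph.cycleGraph (m + 2) with hG
  set A := (Finset.univ : Finset (Finset (Fin (m + 2)))).filter FS with hA
  set B := (Finset.univ : Finset (Finset (Fin (m + 2)))).filter (fun S => IsPMS G S) with hB
  have hmem : ∀ T ∈ A, coverF T ∈ B := by
    intro T hT
    rw [hB, Finset.mem_filter]
    rw [hA, Finset.mem_filter] at hT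
    exact ⟨Finset.mem_univ _, IsPMS_coverF T hT.2⟩
  have hcard := Finset.card_eq_sum_card_fiberwise hmem
  set E := (Finset.univ : Finset (Fin (m + 2))).filter (fun i => i.val % 2 = 0) with hE
  set O := (Finset.univ : Finset (Fin (m + 2))).filter (fun i => i.val % 2 = 1) with hO
  have hENO : E ≠ O := by
    intro hc
    have h0E : (0 : Fin (m + 2)) ∈ E := by
      rw [hE, Finset.mem_filter]
      exact ⟨Finset.mem_univ _, by rw [Fin.val_zero]⟩
    rw [hc, hO, Finset.mem_filter, Fin.val_zero] at h0E
    omega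
  have hfib_univ : A.filter (fun T => coverF T = Finset.univ) = {E, O} := by
    ext T
    simp only [Finset.mem_filter, Finset.mem_insert, Finset.mem_singleton, hA,
      Finset.mem_univ, true_and]
    constructor
    · rintro ⟨hTfs, hTc⟩
      exact coverF_univ_cases hk hn hTfs hTc
    · rintro (rfl | rfl)
      · exact ⟨FS_parity hk hn 0, coverF_parity hk hn 0 (by omega)⟩
      · exact ⟨FS_parity hk hn 1, coverF_parity hk hn 1 (by omega)⟩
  have hEA : E ∈ A := by
    rw [hA, Finset.mem_filter]
    exact ⟨Finset.mem_univ _, FS_parity hk hn 0⟩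
  have huB : Finset.univ ∈ B := by
    have := hmem E hEA
    rwa [coverF_parity hk hn 0 (by omega)] at this
  have hfib_one : ∀ S ∈ B, S ≠ Finset.univ →
      (A.filter (fun T => coverF T = S)).card = 1 := by
    intro S hSB hSne
    rw [Finset.card_eq_one]
    rw [hB, Finset.mem_filter] at hSB
    obtain ⟨T0, hT0fs, hT0c⟩ := coverF_surj hSB.2
    refine ⟨T0, ?_⟩
    ext T
    simp only [Finset.mem_filter, Finset.mem_singleton, hA, Finset.mem_univ, true_and]
    constructor
    · rintro ⟨hTfs, hTc⟩
      exact coverF_inj hTfs hT0fs (by rw [hTc, hT0c]) (by rw [hTc]; exact hSne)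
    · rintro rfl
      exact ⟨hT0fs, hT0c⟩
  rw [← Finset.add_sum_erase _ _ huB] at hcard
  have hsum1 : ∑ S ∈ B.erase Finset.univ, (A.filter (fun T => coverF T = S)).card
      = (B.erase Finset.univ).card := by
    rw [Finset.card_eq_sum_ones]
    exact Finset.sum_congr rfl
      (fun S hS => hfib_one S (Finset.mem_of_mem_erase hS) (Finset.ne_of_mem_erase hS))
  have hfib2 : (A.filter (fun T => coverF T = Finset.univ)).card = 2 := by
    rw [hfib_univ]
    exact Finset.card_pair hENO
  rw [hsum1, hfib2, Finset.card_erase_of_mem huB] at hcard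
  have hBpos : 1 ≤ B.card := Finset.card_pos.mpr ⟨_, huB⟩
  omega

open Classical in
lemma pmPoly_eval_one {V : Type*} [Fintype V] (G : SimpleGraph V) :
    (pmPoly G Finset.univ).eval 1
      = (((Finset.univ : Finset (Finset V)).filter (fun S => IsPMS G S)).card : ℤ) := by
  rw [pmPoly, eval_finset_sum]
  rw [Finset.powerset_univ]
  have : ∀ S ∈ (Finset.univ : Finset (Finset V)),
      eval 1 (if IsPMS G S then (X : Polynomial ℤ) ^ (S.card / 2) else 0)
        = if IsPMS G S then 1 else 0 := by
    intro S _
    by_cases h : IsPMS G S <;> simp [h]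
  rw [Finset.sum_congr rfl this, Finset.sum_boole]

open goldenRatio in
/-- for all `k ≥ 1`, the number of perfectly matchable sets of `C_{2k}`
equals `⌊φ^{2k}⌋` where `φ` is the golden ratio. -/
theorem stmt13 (k : ℕ) (hk : 1 ≤ k) :
    (pmPoly (SimpleGraph.cycleGraph (2 * k)) Finset.univ).eval 1 = ⌊φ ^ (2 * k)⌋ := by
  haveI : NeZero (2 * k) := ⟨by omega⟩
  rw [pmPoly_eval_one, gold_floor k hk]
  have hc := pms_count (n := 2 * k) hk rfl
  have hfc := finCount (n := 2 * k) (by omega)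
  have hfib1 : 1 ≤ Nat.fib (2 * k + 1) := Nat.fib_pos.mpr (by omega)
  rw [show ((Nat.fib (2 * k + 1) : ℤ) + (Nat.fib (2 * k - 1) : ℤ) - 1)
      = ((Nat.fib (2 * k + 1) + Nat.fib (2 * k - 1) - 1 : ℕ) : ℤ) from by
    push_cast [Nat.cast_sub (by omega : 1 ≤ Nat.fib (2 * k + 1) + Nat.fib (2 * k - 1))]
    ring]
  rw [Nat.cast_inj]
  omega
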